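/- Let k ≥ 1. Then G_{k+1} is the disjoint union over w ∈ G_k of the sets Succ(w); that is, every good involution in B_{k+1} lies in Succ(w) for exactly one good involution w ∈ G_k. -/

import Mathlib

namespace PaperB

open scoped Classical

def B (n : ℕ) : Subgroup (Equiv.Perm ℤ) where
  carrier := {w | (∀ i : ℤ, w (-i) = - w i) ∧ ∀ i : ℤ, (n : ℤ) < |i| → w i = i}
  one_mem' := ⟨fun _ => rfl, fun _ _ => rfl⟩
  mul_mem' := by
    rintro a b ⟨ha1, ha2⟩ ⟨hb1, hb2⟩
    refine ⟨fun i => ?_, fun i hi => ?_⟩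
    · rw [Equiv.Perm.mul_apply, Equiv.Perm.mul_apply, hb1, ha1]
    · rw [Equiv.Perm.mul_apply, hb2 i hi, ha2 i hi]
  inv_mem' := by
    rintro a ⟨ha1, ha2⟩
    refine ⟨fun i => a.injective ?_, fun i hi => a.injective ?_⟩
    · rw [Equiv.Perm.inv_def, Equiv.apply_symm_apply, ha1, Equiv.apply_symm_apply]
    · rw [Equiv.Perm.inv_def, Equiv.apply_symm_apply, ha2 i hi]

def t : Equiv.Perm ℤ := Equiv.swap (-1) 1

def s (i : ℕ) : Equiv.Perm ℤ :=
  Equiv.swap (i : ℤ) ((i : ℤ) + 1) * Equiv.swap (-(i : ℤ)) (-((i : ℤ) + 1))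

def gens (n : ℕ) : Set (Equiv.Perm ℤ) := insert t (s '' Set.Ico 1 n)

noncomputable def len (n : ℕ) (w : Equiv.Perm ℤ) : ℕ :=
  sInf {l | ∃ L : List (Equiv.Perm ℤ), (∀ g ∈ L, g ∈ gens n) ∧ L.prod = w ∧ L.length = l}

/-- A model of the Iwahori–Hecke algebra `H_{p,q}(Bₘ)`:  a `ℂ`-algebra `H` together with a
family `T w`, `w ∈ Bₘ`, which is linearly independent, satisfies `T 1 = 1`, and satisfies the
standard multiplication rule
`T w * T g = T (w g)` if `ℓ(w g) > ℓ(w)` and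
`T w * T g = par(g) T (w g) + (1 - par(g)) T w` otherwise,
where `par t = p` and `par sᵢ = q`. -/
structure HeckeModel (m : ℕ) (p q : ℂ) (H : Type) [Ring H] [Algebra ℂ H] where
  T : Equiv.Perm ℤ → H
  T_one : T 1 = 1
  T_mul : ∀ w ∈ B m, ∀ g ∈ gens m,
    T w * T g =
      if len m w < len m (w * g) then T (w * g)
      else (if g = t then p else q) • T (w * g) + (1 - if g = t then p else q) • T w
  free : LinearIndependent ℂ (fun w : {x // x ∈ B m} => T w.1)

/-- The element `-w`, given by `(-w)(i) = -(w i)`. -/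
def negOf (w : Equiv.Perm ℤ) : Equiv.Perm ℤ := (Equiv.neg ℤ : Equiv.Perm ℤ) * w

/-- A good involution in `B_k`. -/
def Good (k : ℕ) (w : Equiv.Perm ℤ) : Prop :=
  w ∈ B k ∧ w * w = 1 ∧ ∀ i : ℤ, 1 ≤ i → i ≤ (k : ℤ) → (w i = i ∨ w i < 0)

/-- `a(w)`: the number of `1 ≤ j ≤ m` with `w j = j`. -/
noncomputable def aFix (m : ℕ) (w : Equiv.Perm ℤ) : ℕ :=
  ((Finset.Icc (1 : ℤ) (m : ℤ)).filter fun j => w j = j).card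

/-- `d(i, w)`: the number of `i < j ≤ m` with `w j = j`. -/
noncomputable def dFix (m : ℕ) (i : ℤ) (w : Equiv.Perm ℤ) : ℕ :=
  ((Finset.Ioc i (m : ℤ)).filter fun j => w j = j).card

/-- `c(w)`: the number of `w`-tidy pairs `{i, j}`, i.e. pairs of distinct indices
`1 ≤ i, j ≤ m` with `-w i < j` and `-w j < i`. -/
noncomputable def cTidy (m : ℕ) (w : Equiv.Perm ℤ) : ℕ :=
  (((Finset.Icc (1 : ℤ) (m : ℤ)) ×ˢ (Finset.Icc (1 : ℤ) (m : ℤ))).filter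
    fun pr => pr.1 < pr.2 ∧ -w pr.1 < pr.2 ∧ -w pr.2 < pr.1).card

/-- `x = t s₁ s₂ ⋯ s_k ∈ B_{k+1}`. -/
def xE (k : ℕ) : Equiv.Perm ℤ := (t :: ((List.range k).map fun j => s (j + 1))).prod

/-- `xᵢ = t s₁ ⋯ ŝᵢ ⋯ s_k ∈ B_{k+1}` (the product with `sᵢ` omitted). -/
def xI (k i : ℕ) : Equiv.Perm ℤ :=
  (t :: ((((List.range k).map fun j => j + 1).filter fun j => j ≠ i).map s)).prod


/-- The parabolic subgroup `S_k ⊆ B_k` generated by `s₁, …, s_{k-1}`. -/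
def Spar (k : ℕ) : Subgroup (Equiv.Perm ℤ) := Subgroup.closure (s '' Set.Ico 1 k)

/-- `c(-w)` for `w ∈ S_k`: the number of neat pairs of `w`, i.e. pairs `{i,j}` of distinct
indices `1 ≤ i, j ≤ k` with `w i < j` and `w j < i`. -/
noncomputable def cNeat (k : ℕ) (w : Equiv.Perm ℤ) : ℕ :=
  (((Finset.Icc (1 : ℤ) (k : ℤ)) ×ˢ (Finset.Icc (1 : ℤ) (k : ℤ))).filter
    fun pr => pr.1 < pr.2 ∧ w pr.1 < pr.2 ∧ w pr.2 < pr.1).card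

/-- The set `X_{0,k}` of distinguished (minimal length) right coset representatives of
`S_k` in `B_k`. -/
def X0 (k : ℕ) : Set (Equiv.Perm ℤ) :=
  {x | x ∈ B k ∧ ∀ u ∈ Spar k, len k x ≤ len k (u * x)}

/-- `Succ(w)` for a good involution `w ∈ G_k`. -/
def Succ (k : ℕ) (w : Equiv.Perm ℤ) : Set (Equiv.Perm ℤ) :=
  {xE k * w * (xE k)⁻¹, xE k * w * (xE k)⁻¹ * t} ∪
    {y | ∃ i : ℕ, 1 ≤ i ∧ i ≤ k ∧ w (i : ℤ) = (i : ℤ) ∧ y = xE k * w * (xI k i)⁻¹}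

/-- The element `c = s_{n+1} s_{n+2} ⋯ s_{n+k} ∈ B_{n+k+1}`. -/
def cElt (n k : ℕ) : Equiv.Perm ℤ := ((List.range k).map fun j => s (n + 1 + j)).prod

/-- The palindromic product `s_{n+k} s_{n+k-1} ⋯ s_{n+i} ⋯ s_{n+k-1} s_{n+k}`. -/
def pal (n k i : ℕ) : Equiv.Perm ℤ :=
  (((List.range (k - i)).map fun j => s (n + k - j)) ++ [s (n + i)] ++
    ((List.range (k - i)).map fun j => s (n + i + 1 + j))).prod

/-- The parabolic subgroup `B_n × S_k` of `B_{n+k}`, generated by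
`{t, s₁, …, s_{n-1}} ∪ {s_{n+1}, …, s_{n+k-1}}` (with `t` omitted when `n = 0`). -/
def P (n k : ℕ) : Subgroup (Equiv.Perm ℤ) :=
  Subgroup.closure
    ((if n = 0 then (∅ : Set (Equiv.Perm ℤ)) else {t}) ∪ s '' Set.Ico 1 n ∪
      s '' Set.Ico (n + 1) (n + k))

/-- The factor `S_k` of `B_n × S_k`, generated by `s_{n+1}, …, s_{n+k-1}`. -/
def SparF (n k : ℕ) : Subgroup (Equiv.Perm ℤ) := Subgroup.closure (s '' Set.Ico (n + 1) (n + k))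

/-- The set `X_{n,k}` of distinguished (minimal length) right coset representatives of
`B_n × S_k` in `B_{n+k}`. -/
def Xnk (n k : ℕ) : Set (Equiv.Perm ℤ) :=
  {x | x ∈ B (n + k) ∧ ∀ u ∈ P n k, len (n + k) x ≤ len (n + k) (u * x)}

/-- The strict Bruhat order on `B_m`: `x < w` iff `x ≠ w` and some reduced expression of `w`
has a subword whose product is `x`. -/
def bruhatLT (m : ℕ) (x w : Equiv.Perm ℤ) : Prop :=
  x ≠ w ∧ ∃ L : List (Equiv.Perm ℤ), (∀ g ∈ L, g ∈ gens m) ∧ L.prod = w ∧ L.length = len m w ∧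
    ∃ L' : List (Equiv.Perm ℤ), L'.Sublist L ∧ L'.prod = x

/- ### Auxiliary lemmas for `succ_partition` -/

lemma t_apply (j : ℤ) : t j = if j = -1 then 1 else if j = 1 then -1 else j := by
  simp only [t, Equiv.swap_apply_def]

lemma s_apply (n : ℕ) (hn : 1 ≤ n) (j : ℤ) :
    s n j = if j = (n:ℤ) then (n:ℤ)+1 else if j = (n:ℤ)+1 then (n:ℤ)
      else if j = -(n:ℤ) then -((n:ℤ)+1) else if j = -((n:ℤ)+1) then -(n:ℤ) else j := by
  have hn' : (1:ℤ) ≤ (n:ℤ) := by exact_mod_cast hn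
  simp only [s, Equiv.Perm.mul_apply, Equiv.swap_apply_def]
  split_ifs <;> omega

lemma xE_succ (k : ℕ) : xE (k+1) = xE k * s (k+1) := by
  simp [xE, List.range_succ, mul_assoc]

lemma xE_apply (k : ℕ) : ∀ j : ℤ,
    xE k j = if 1 ≤ j ∧ j ≤ (k:ℤ) then j+1 else if j = (k:ℤ)+1 then -1
      else if -(k:ℤ) ≤ j ∧ j ≤ -1 then j-1 else if j = -((k:ℤ)+1) then 1 else j := by
  induction k with
  | zero =>
    intro j
    have : xE 0 = t := by simp [xE]
    rw [this, t_apply]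
    split_ifs <;> omega
  | succ k ih =>
    intro j
    rw [xE_succ, Equiv.Perm.mul_apply, s_apply (k+1) (by omega), ih]
    push_cast
    split_ifs <;> omega

lemma xE_inv_apply (k : ℕ) (j : ℤ) :
    (xE k)⁻¹ j = if 2 ≤ j ∧ j ≤ (k:ℤ)+1 then j-1 else if j = 1 then -((k:ℤ)+1)
      else if -((k:ℤ)+1) ≤ j ∧ j ≤ -2 then j+1 else if j = -1 then (k:ℤ)+1 else j := by
  rw [Equiv.Perm.inv_def, Equiv.symm_apply_eq, xE_apply]
  split_ifs <;> omega

lemma xI_base (i : ℕ) (hi : 1 ≤ i) : xI i i = xE (i-1) := by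
  obtain ⟨m, rfl⟩ : ∃ m, i = m + 1 := ⟨i-1, by omega⟩
  have h : (((List.range (m+1)).map fun j => j + 1).filter fun j => j ≠ m+1) =
      (List.range m).map fun j => j + 1 := by
    rw [List.range_succ, List.map_append, List.filter_append, List.filter_eq_self.mpr]
    · simp
    · intro a ha
      simp only [List.mem_map, List.mem_range] at ha
      obtain ⟨b, hb, rfl⟩ := ha
      simp only [ne_eq, decide_eq_true_eq]
      omega
  simp only [xI, h, Nat.add_sub_cancel, xE, List.map_map]
  rfl

lemma xI_succ (k i : ℕ) (hik : i ≤ k) : xI (k+1) i = xI k i * s (k+1) := by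
  have hne : k + 1 ≠ i := by omega
  simp [xI, List.range_succ, List.filter_append, hne, mul_assoc]

set_option maxHeartbeats 1600000 in
lemma xI_apply (i : ℕ) (hi : 1 ≤ i) : ∀ k, i ≤ k → ∀ j : ℤ,
    xI k i j = if j = (i:ℤ) then -1 else if j = -(i:ℤ) then 1
      else if 1 ≤ j ∧ j ≤ (k:ℤ) then j+1 else if j = (k:ℤ)+1 then (i:ℤ)+1
      else if -(k:ℤ) ≤ j ∧ j ≤ -1 then j-1 else if j = -((k:ℤ)+1) then -((i:ℤ)+1) else j := by
  intro k hk
  induction k, hk using Nat.le_induction with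
  | base =>
    intro j
    rw [xI_base i hi, xE_apply]
    have hc : ((i-1:ℕ):ℤ) = (i:ℤ)-1 := by omega
    rw [hc]
    split_ifs <;> omega
  | succ k hk ih =>
    intro j
    rw [xI_succ k i hk, Equiv.Perm.mul_apply, s_apply (k+1) (by omega), ih]
    have hc : ((k+1:ℕ):ℤ) = (k:ℤ)+1 := by push_cast; ring
    rw [hc]
    split_ifs <;> omega

set_option maxHeartbeats 1600000 in
lemma xI_inv_apply (k i : ℕ) (hi : 1 ≤ i) (hik : i ≤ k) (j : ℤ) :
    (xI k i)⁻¹ j = if j = -1 then (i:ℤ) else if j = 1 then -(i:ℤ)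
      else if 2 ≤ j ∧ j ≤ (k:ℤ)+1 ∧ j ≠ (i:ℤ)+1 then j-1 else if j = (i:ℤ)+1 then (k:ℤ)+1
      else if -((k:ℤ)+1) ≤ j ∧ j ≤ -2 ∧ j ≠ -((i:ℤ)+1) then j+1
      else if j = -((i:ℤ)+1) then -((k:ℤ)+1) else j := by
  have hi' : (1:ℤ) ≤ (i:ℤ) := by exact_mod_cast hi
  have hik' : (i:ℤ) ≤ (k:ℤ) := by exact_mod_cast hik
  rw [Equiv.Perm.inv_def, Equiv.symm_apply_eq]
  split_ifs <;> rw [xI_apply i hi k hik] <;> split_ifs <;> omega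

lemma xE_neg (k : ℕ) (j : ℤ) : xE k (-j) = -(xE k j) := by
  rw [xE_apply, xE_apply]; split_ifs <;> omega

lemma xE_inv_neg (k : ℕ) (j : ℤ) : (xE k)⁻¹ (-j) = -((xE k)⁻¹ j) := by
  rw [xE_inv_apply, xE_inv_apply]; split_ifs <;> omega

lemma xI_neg (k i : ℕ) (hi : 1 ≤ i) (hik : i ≤ k) (j : ℤ) :
    xI k i (-j) = -(xI k i j) := by
  rw [xI_apply i hi k hik, xI_apply i hi k hik]; split_ifs <;> omega

lemma perm_inv_eq {σ : Equiv.Perm ℤ} {a b : ℤ} (h : σ a = b) : σ⁻¹ b = a := by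
  rw [← h, Equiv.Perm.inv_def, Equiv.symm_apply_apply]

lemma perm_sq_apply {w : Equiv.Perm ℤ} (h : w * w = 1) (j : ℤ) : w (w j) = j := by
  have := congrArg (fun σ : Equiv.Perm ℤ => σ j) h
  simpa using this

lemma mem_B_iff (n : ℕ) (w : Equiv.Perm ℤ) :
    w ∈ B n ↔ (∀ i : ℤ, w (-i) = - w i) ∧ (∀ i : ℤ, (n : ℤ) < |i| → w i = i) := Iff.rfl

lemma lt_abs_of {a m : ℤ} (h : m < a ∨ a < -m) : m < |a| := by
  rcases h with h | h
  · exact lt_of_lt_of_le h (le_abs_self a)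
  · have h2 : m < -a := by omega
    exact lt_of_lt_of_le h2 (neg_le_abs a)

lemma good_of (k : ℕ) (w : Equiv.Perm ℤ)
    (hneg : ∀ j : ℤ, w (-j) = -(w j))
    (hinv : w * w = 1)
    (hfix : ∀ j : ℤ, (k:ℤ) < j → w j = j)
    (hgood : ∀ j : ℤ, 1 ≤ j → j ≤ (k:ℤ) → (w j = j ∨ w j < 0)) :
    Good k w := by
  refine ⟨(mem_B_iff k w).mpr ⟨hneg, fun i hi => ?_⟩, hinv, hgood⟩
  rcases lt_or_ge (k:ℤ) i with h | h
  · exact hfix i h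
  · have h2 : (k:ℤ) < -i := by
      rcases abs_cases i with ⟨he, _⟩ | ⟨he, _⟩ <;> omega
    have h3 := hneg (-i)
    rw [neg_neg, hfix (-i) h2] at h3
    rw [h3, neg_neg]

lemma succ_val1 (k : ℕ) (w' v : Equiv.Perm ℤ) (hw' : Good k w') (hm : v ∈ Succ k w') :
    (v 1 = 1 ∧ v = xE k * w' * (xE k)⁻¹) ∨
    (v 1 = -1 ∧ v = xE k * w' * (xE k)⁻¹ * t) ∨
    (∃ i : ℕ, 1 ≤ i ∧ i ≤ k ∧ w' (i:ℤ) = (i:ℤ) ∧ v 1 = -((i:ℤ)+1) ∧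
      v = xE k * w' * (xI k i)⁻¹) := by
  obtain ⟨hwB, _, _⟩ := hw'
  obtain ⟨hwneg, hwfix⟩ := (mem_B_iff _ _).mp hwB
  have hwtop : w' (-((k:ℤ)+1)) = -((k:ℤ)+1) := hwfix _ (lt_abs_of (Or.inr (by omega)))
  have hwtop' : w' ((k:ℤ)+1) = (k:ℤ)+1 := hwfix _ (lt_abs_of (Or.inl (by omega)))
  simp only [Succ, Set.mem_union, Set.mem_insert_iff, Set.mem_singleton_iff,
    Set.mem_setOf_eq] at hm
  rcases hm with (hm | hm) | ⟨i, hi1, hik, hwi, hm⟩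
  · left
    refine ⟨?_, hm⟩
    rw [hm]
    simp only [Equiv.Perm.mul_apply]
    rw [show ((xE k)⁻¹ : Equiv.Perm ℤ) 1 = -((k:ℤ)+1) from
      perm_inv_eq (by rw [xE_apply]; split_ifs <;> omega)]
    rw [hwtop, xE_apply]
    split_ifs <;> omega
  · right; left
    refine ⟨?_, hm⟩
    rw [hm]
    simp only [Equiv.Perm.mul_apply]
    rw [show t 1 = -1 from by rw [t_apply]; norm_num]
    rw [show ((xE k)⁻¹ : Equiv.Perm ℤ) (-1) = (k:ℤ)+1 from
      perm_inv_eq (by rw [xE_apply]; split_ifs <;> omega)]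
    rw [hwtop', xE_apply]
    split_ifs <;> omega
  · right; right
    refine ⟨i, hi1, hik, hwi, ?_, hm⟩
    have hi1' : (1:ℤ) ≤ (i:ℤ) := by exact_mod_cast hi1
    have hik' : (i:ℤ) ≤ (k:ℤ) := by exact_mod_cast hik
    rw [hm]
    simp only [Equiv.Perm.mul_apply]
    rw [show ((xI k i)⁻¹ : Equiv.Perm ℤ) 1 = -(i:ℤ) from
      perm_inv_eq (by rw [xI_apply i hi1 k hik]; split_ifs <;> omega)]
    rw [show w' (-(i:ℤ)) = -(i:ℤ) from by rw [hwneg, hwi]]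
    rw [xE_apply]
    split_ifs <;> omega

set_option maxHeartbeats 1600000 in
theorem succ_partition (k : ℕ) (hk : 1 ≤ k) (v : Equiv.Perm ℤ) (hv : Good (k + 1) v) :
    ∃! w : Equiv.Perm ℤ, Good k w ∧ v ∈ Succ k w := by
  obtain ⟨hvB, hvsq, hvgood⟩ := hv
  obtain ⟨hvneg, hvfix⟩ := (mem_B_iff _ v).mp hvB
  have hvv : ∀ j, v (v j) = j := perm_sq_apply hvsq
  have hk1 : ((k+1:ℕ):ℤ) = (k:ℤ)+1 := by push_cast; ring
  simp only [hk1] at hvfix hvgood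
  have hvfix' : ∀ j : ℤ, (k:ℤ)+1 < j ∨ j < -((k:ℤ)+1) → v j = j :=
    fun j hj => hvfix j (lt_abs_of hj)
  have hvrange : ∀ j : ℤ, -((k:ℤ)+1) ≤ j → j ≤ (k:ℤ)+1 →
      -((k:ℤ)+1) ≤ v j ∧ v j ≤ (k:ℤ)+1 := by
    intro j h1 h2
    by_contra hcon
    push_neg at hcon
    have hbig : v (v j) = v j := by
      refine hvfix' (v j) ?_
      by_cases hc : -((k:ℤ)+1) ≤ v j
      · left; exact hcon hc
      · right; omega
    rw [hvv] at hbig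
    by_cases hc : -((k:ℤ)+1) ≤ v j
    · have := hcon hc; omega
    · omega
  rcases hvgood 1 le_rfl (by omega) with hc | hcneg
  · -- Case A : v 1 = 1
    have hvm1 : v (-1) = -1 := by rw [hvneg 1, hc]
    refine ⟨(xE k)⁻¹ * v * xE k, ⟨?_, ?_⟩, ?_⟩
    · refine good_of k _ ?_ ?_ ?_ ?_
      · intro j
        simp only [Equiv.Perm.mul_apply]
        rw [xE_neg, hvneg, xE_inv_neg]
      · have h1 : (xE k)⁻¹ * v * xE k * ((xE k)⁻¹ * v * xE k) =
            (xE k)⁻¹ * (v * v) * xE k := by group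
        rw [h1, hvsq]
        group
      · intro j hj
        simp only [Equiv.Perm.mul_apply]
        by_cases hj2 : j = (k:ℤ)+1
        · subst hj2
          rw [show xE k ((k:ℤ)+1) = -1 from by rw [xE_apply]; split_ifs <;> omega, hvm1]
          exact perm_inv_eq (by rw [xE_apply]; split_ifs <;> omega)
        · rw [show xE k j = j from by rw [xE_apply]; split_ifs <;> omega,
            hvfix' j (Or.inl (by omega))]
          exact perm_inv_eq (by rw [xE_apply]; split_ifs <;> omega)
      · intro j h1j hjk
        simp only [Equiv.Perm.mul_apply]
        rw [show xE k j = j+1 from by rw [xE_apply]; split_ifs <;> omega]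
        rcases hvgood (j+1) (by omega) (by omega) with h | h
        · left; rw [h]
          exact perm_inv_eq (by rw [xE_apply]; split_ifs <;> omega)
        · right
          have hb := hvrange (j+1) (by omega) (by omega)
          have hne : v (j+1) ≠ -1 := by
            intro he
            have h2 := hvv (j+1)
            rw [he, hvm1] at h2
            omega
          rw [xE_inv_apply]
          split_ifs <;> omega
    · exact Set.mem_union_left _ (Set.mem_insert_iff.mpr (Or.inl (by group)))
    · rintro w' ⟨hg', hm'⟩
      rcases succ_val1 k w' v hg' hm' with ⟨h1, hEq⟩ | ⟨h1, _⟩ | ⟨i, hi1, _, _, h1, _⟩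
      · rw [hEq]; group
      · rw [hc] at h1; norm_num at h1
      · rw [hc] at h1; exact absurd h1 (by omega)
  · -- v 1 < 0
    by_cases hcm1 : v 1 = -1
    · -- Case B : v 1 = -1
      have hvm1 : v (-1) = 1 := by rw [hvneg 1, hcm1]; ring
      have htt : t * t = 1 := Equiv.swap_mul_self (-1) 1
      refine ⟨(xE k)⁻¹ * (v * t) * xE k, ⟨?_, ?_⟩, ?_⟩
      · refine good_of k _ ?_ ?_ ?_ ?_
        · intro j
          simp only [Equiv.Perm.mul_apply]
          rw [xE_neg,
            show t (-(xE k j)) = -(t (xE k j)) from by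
              rw [t_apply, t_apply]; split_ifs <;> omega,
            hvneg, xE_inv_neg]
        · have hvt : v * t = t * v := by
            have h := Equiv.mul_swap_eq_swap_mul v (-1) 1
            rw [hvm1, hcm1] at h
            show v * Equiv.swap (-1) 1 = Equiv.swap (-1) 1 * v
            rw [h, Equiv.swap_comm]
          have h1 : (xE k)⁻¹ * (v * t) * xE k * ((xE k)⁻¹ * (v * t) * xE k) =
              (xE k)⁻¹ * (v * (t * v) * t) * xE k := by group
          rw [h1, ← hvt]
          have h2 : (xE k)⁻¹ * (v * (v * t) * t) * xE k =
              (xE k)⁻¹ * ((v * v) * (t * t)) * xE k := by group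
          rw [h2, hvsq, htt]
          group
        · intro j hj
          simp only [Equiv.Perm.mul_apply]
          by_cases hj2 : j = (k:ℤ)+1
          · subst hj2
            rw [show xE k ((k:ℤ)+1) = -1 from by rw [xE_apply]; split_ifs <;> omega,
              show t (-1) = 1 from by rw [t_apply]; norm_num, hcm1]
            exact perm_inv_eq (by rw [xE_apply]; split_ifs <;> omega)
          · rw [show xE k j = j from by rw [xE_apply]; split_ifs <;> omega,
              show t j = j from by rw [t_apply]; split_ifs <;> omega,
              hvfix' j (Or.inl (by omega))]
            exact perm_inv_eq (by rw [xE_apply]; split_ifs <;> omega)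
        · intro j h1j hjk
          simp only [Equiv.Perm.mul_apply]
          rw [show xE k j = j+1 from by rw [xE_apply]; split_ifs <;> omega,
            show t (j+1) = j+1 from by rw [t_apply]; split_ifs <;> omega]
          rcases hvgood (j+1) (by omega) (by omega) with h | h
          · left; rw [h]
            exact perm_inv_eq (by rw [xE_apply]; split_ifs <;> omega)
          · right
            have hb := hvrange (j+1) (by omega) (by omega)
            have hne : v (j+1) ≠ -1 := by
              intro he
              have h2 := hvv (j+1)
              rw [he, hvm1] at h2
              omega
            rw [xE_inv_apply]
            split_ifs <;> omega
      · refine Set.mem_union_left _ (Set.mem_insert_iff.mpr (Or.inr ?_))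
        refine Set.mem_singleton_iff.mpr ?_
        rw [show xE k * ((xE k)⁻¹ * (v * t) * xE k) * (xE k)⁻¹ * t = v * (t * t) from by
          group, htt, mul_one]
      · rintro w' ⟨hg', hm'⟩
        rcases succ_val1 k w' v hg' hm' with ⟨h1, _⟩ | ⟨h1, hEq⟩ | ⟨i, hi1, _, _, h1, _⟩
        · rw [hcm1] at h1; norm_num at h1
        · have hvt2 : v * t = xE k * w' * (xE k)⁻¹ := by
            rw [hEq, mul_assoc (xE k * w' * (xE k)⁻¹) t t, htt, mul_one]
          rw [hvt2]; group
        · rw [hcm1] at h1; exact absurd h1 (by omega)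
    · -- Case C : v 1 = -(i+1), 1 ≤ i ≤ k
      obtain ⟨c, hcv⟩ : ∃ c : ℤ, v 1 = c := ⟨_, rfl⟩
      rw [hcv] at hcneg hcm1
      have hb1 := hvrange 1 (by omega) (by omega)
      rw [hcv] at hb1
      obtain ⟨i, hi⟩ : ∃ i : ℕ, (i:ℤ) = -c - 1 := ⟨(-c-1).toNat, by omega⟩
      have hi1 : 1 ≤ i := by omega
      have hik : i ≤ k := by omega
      have hi1' : (1:ℤ) ≤ (i:ℤ) := by exact_mod_cast hi1
      have hik' : (i:ℤ) ≤ (k:ℤ) := by exact_mod_cast hik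
      have hv1 : v 1 = -((i:ℤ)+1) := by rw [hcv]; omega
      have hvm : v (-((i:ℤ)+1)) = 1 := by
        have h2 := hvv 1
        rw [hv1] at h2
        exact h2
      have hvm1 : v (-1) = (i:ℤ)+1 := by rw [hvneg 1, hv1]; ring
      have hvip : v ((i:ℤ)+1) = -1 := by
        have h2 := hvneg ((i:ℤ)+1)
        rw [hvm] at h2
        linarith
      have hz : xI k i * (xE k)⁻¹ =
          Equiv.swap 1 (-((i:ℤ)+1)) * Equiv.swap (-1) ((i:ℤ)+1) := by
        apply Equiv.ext
        intro j
        simp only [Equiv.Perm.mul_apply]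
        rw [xE_inv_apply]
        split_ifs <;>
          (rw [xI_apply i hi1 k hik]; simp only [Equiv.swap_apply_def];
            split_ifs <;> first | contradiction | omega)
      have hz' : xI k i = Equiv.swap 1 (-((i:ℤ)+1)) * Equiv.swap (-1) ((i:ℤ)+1) * xE k := by
        rw [← hz]; group
      have hzz : (Equiv.swap 1 (-((i:ℤ)+1)) * Equiv.swap (-1) ((i:ℤ)+1)) *
          (Equiv.swap 1 (-((i:ℤ)+1)) * Equiv.swap (-1) ((i:ℤ)+1)) = 1 := by
        have hcomm : Equiv.swap (-1) ((i:ℤ)+1) * Equiv.swap 1 (-((i:ℤ)+1)) =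
            Equiv.swap 1 (-((i:ℤ)+1)) * Equiv.swap (-1) ((i:ℤ)+1) := by
          rw [Equiv.mul_swap_eq_swap_mul]
          congr 1
          rw [Equiv.swap_apply_of_ne_of_ne (by omega) (by omega),
            Equiv.swap_apply_of_ne_of_ne (by omega) (by omega)]
        have h1 : (Equiv.swap 1 (-((i:ℤ)+1)) * Equiv.swap (-1) ((i:ℤ)+1)) *
            (Equiv.swap 1 (-((i:ℤ)+1)) * Equiv.swap (-1) ((i:ℤ)+1)) =
            Equiv.swap 1 (-((i:ℤ)+1)) * (Equiv.swap (-1) ((i:ℤ)+1) *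
              Equiv.swap 1 (-((i:ℤ)+1))) * Equiv.swap (-1) ((i:ℤ)+1) := by group
        rw [h1, hcomm]
        have h2 : Equiv.swap 1 (-((i:ℤ)+1)) * (Equiv.swap 1 (-((i:ℤ)+1)) *
            Equiv.swap (-1) ((i:ℤ)+1)) * Equiv.swap (-1) ((i:ℤ)+1) =
            (Equiv.swap 1 (-((i:ℤ)+1)) * Equiv.swap 1 (-((i:ℤ)+1))) *
            (Equiv.swap (-1) ((i:ℤ)+1) * Equiv.swap (-1) ((i:ℤ)+1)) := by group
        rw [h2, Equiv.swap_mul_self, Equiv.swap_mul_self, one_mul]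
      have hvz : v * (Equiv.swap 1 (-((i:ℤ)+1)) * Equiv.swap (-1) ((i:ℤ)+1)) =
          (Equiv.swap 1 (-((i:ℤ)+1)) * Equiv.swap (-1) ((i:ℤ)+1)) * v := by
        have e1 : v * Equiv.swap 1 (-((i:ℤ)+1)) = Equiv.swap 1 (-((i:ℤ)+1)) * v := by
          have h := Equiv.mul_swap_eq_swap_mul v 1 (-((i:ℤ)+1))
          rw [hv1, hvm] at h
          rw [h, Equiv.swap_comm]
        have e2 : v * Equiv.swap (-1) ((i:ℤ)+1) = Equiv.swap (-1) ((i:ℤ)+1) * v := by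
          have h := Equiv.mul_swap_eq_swap_mul v (-1) ((i:ℤ)+1)
          rw [hvm1, hvip] at h
          rw [h, Equiv.swap_comm]
        calc v * (Equiv.swap 1 (-((i:ℤ)+1)) * Equiv.swap (-1) ((i:ℤ)+1)) =
            (v * Equiv.swap 1 (-((i:ℤ)+1))) * Equiv.swap (-1) ((i:ℤ)+1) := by group
          _ = Equiv.swap 1 (-((i:ℤ)+1)) * (v * Equiv.swap (-1) ((i:ℤ)+1)) := by
              rw [e1]; group
          _ = Equiv.swap 1 (-((i:ℤ)+1)) * (Equiv.swap (-1) ((i:ℤ)+1) * v) := by rw [e2]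
          _ = (Equiv.swap 1 (-((i:ℤ)+1)) * Equiv.swap (-1) ((i:ℤ)+1)) * v := by group
      have hwi : ((xE k)⁻¹ * v * xI k i) (i:ℤ) = (i:ℤ) := by
        simp only [Equiv.Perm.mul_apply]
        rw [show xI k i (i:ℤ) = -1 from by
          rw [xI_apply i hi1 k hik]; split_ifs <;> omega, hvm1]
        exact perm_inv_eq (by rw [xE_apply]; split_ifs <;> omega)
      refine ⟨(xE k)⁻¹ * v * xI k i, ⟨?_, ?_⟩, ?_⟩
      · refine good_of k _ ?_ ?_ ?_ ?_
        · intro j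
          simp only [Equiv.Perm.mul_apply]
          rw [xI_neg k i hi1 hik, hvneg, xE_inv_neg]
        · have h1 : ((xE k)⁻¹ * v * xI k i) * ((xE k)⁻¹ * v * xI k i) =
              (xE k)⁻¹ * (v * (xI k i * (xE k)⁻¹)) * (v * xI k i) := by group
          rw [h1, hz, hvz]
          have h2 : (xE k)⁻¹ * ((Equiv.swap 1 (-((i:ℤ)+1)) * Equiv.swap (-1) ((i:ℤ)+1)) * v) *
              (v * xI k i) = (xE k)⁻¹ * (Equiv.swap 1 (-((i:ℤ)+1)) *
                Equiv.swap (-1) ((i:ℤ)+1)) * (v * v) * xI k i := by group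
          rw [h2, hvsq, mul_one, hz']
          have h3 : (xE k)⁻¹ * (Equiv.swap 1 (-((i:ℤ)+1)) * Equiv.swap (-1) ((i:ℤ)+1)) *
              (Equiv.swap 1 (-((i:ℤ)+1)) * Equiv.swap (-1) ((i:ℤ)+1) * xE k) =
              (xE k)⁻¹ * ((Equiv.swap 1 (-((i:ℤ)+1)) * Equiv.swap (-1) ((i:ℤ)+1)) *
                (Equiv.swap 1 (-((i:ℤ)+1)) * Equiv.swap (-1) ((i:ℤ)+1))) * xE k := by group
          rw [h3, hzz]
          group
        · intro j hj
          simp only [Equiv.Perm.mul_apply]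
          by_cases hj2 : j = (k:ℤ)+1
          · subst hj2
            rw [show xI k i ((k:ℤ)+1) = (i:ℤ)+1 from by
              rw [xI_apply i hi1 k hik]; split_ifs <;> omega, hvip]
            exact perm_inv_eq (by rw [xE_apply]; split_ifs <;> omega)
          · rw [show xI k i j = j from by
              rw [xI_apply i hi1 k hik]; split_ifs <;> omega,
              hvfix' j (Or.inl (by omega))]
            exact perm_inv_eq (by rw [xE_apply]; split_ifs <;> omega)
        · intro j h1j hjk
          simp only [Equiv.Perm.mul_apply]
          by_cases hji : j = (i:ℤ)
          · left
            rw [hji]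
            exact hwi
          · rw [show xI k i j = j+1 from by
              rw [xI_apply i hi1 k hik]; split_ifs <;> omega]
            rcases hvgood (j+1) (by omega) (by omega) with h | h
            · left; rw [h]
              exact perm_inv_eq (by rw [xE_apply]; split_ifs <;> omega)
            · right
              have hb := hvrange (j+1) (by omega) (by omega)
              have hne : v (j+1) ≠ -1 := by
                intro he
                have h2 := hvv (j+1)
                rw [he, hvm1] at h2
                omega
              rw [xE_inv_apply]
              split_ifs <;> omega
      · exact Set.mem_union_right _ ⟨i, hi1, hik, hwi, by group⟩
      · rintro w' ⟨hg', hm'⟩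
        rcases succ_val1 k w' v hg' hm' with ⟨h1, _⟩ | ⟨h1, _⟩ |
          ⟨i', hi1', hik'2, hwi', h1, hEq⟩
        · rw [hv1] at h1; exact absurd h1 (by omega)
        · rw [hv1] at h1; exact absurd h1 (by omega)
        · rw [hv1] at h1
          have hii : i' = i := by omega
          subst hii
          rw [hEq]; group

end PaperB
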